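/- Let A'₁,…,A'ₙ be a toric system on a smooth projective surface X', let p: X → X' be the blow-up of a point with exceptional divisor E, and set Aᵢ = p*A'ᵢ. Then for any 2 ≤ m ≤ n, the sequence A₁,…,A_{m-2}, A_{m-1}-E, E, A_m-E, A_{m+1},…,Aₙ is a toric system on X. -/

import Mathlib

/-- A toric system: `n ≥ 3`, cyclically adjacent intersections `1`, other pairwise
intersections `0` (except the `(1,n)` pair, which is `1`), sum equal to `-K`. -/
def IsToricSystem {P : Type} [AddCommGroup P] (ι : P → P → ℤ) (K : P)
    (L : List P) : Prop :=
  3 ≤ L.length ∧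
  (∀ i, i + 1 < L.length → ι (L.getD i 0) (L.getD (i + 1) 0) = 1) ∧
  ι (L.getD (L.length - 1) 0) (L.getD 0 0) = 1 ∧
  (∀ i j, i + 1 < j → j < L.length → ¬(i = 0 ∧ j = L.length - 1) →
    ι (L.getD i 0) (L.getD j 0) = 0) ∧
  L.sum = -K

/-- Let `A'₁,…,A'ₙ` be a toric system on a surface `X'`, let `p : X → X'`
be the blow-up of a point with exceptional divisor `E` (`E² = -1`, `p*D·E = 0`,
`p*D₁·p*D₂ = D₁·D₂`, `K_X = p*K_{X'} + E`), and `Aᵢ = p*A'ᵢ`. Then for `2 ≤ m ≤ n`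
(1-based), the augmentation `A₁,…,A_{m-2}, A_{m-1}-E, E, A_m-E, A_{m+1},…,Aₙ` is a
toric system on `X`. -/
theorem stmt5 {P' P : Type} [AddCommGroup P'] [AddCommGroup P]
    (ι' : P' → P' → ℤ) (ι : P → P → ℤ)
    (hbiadd : ∀ a b c : P, ι (a + b) c = ι a c + ι b c)
    (hsymm : ∀ a b : P, ι a b = ι b a)
    (K' : P') (K : P) (p : P' →+ P) (E : P)
    (hE2 : ι E E = -1)
    (hpE : ∀ D' : P', ι (p D') E = 0)
    (hpp : ∀ a b : P', ι (p a) (p b) = ι' a b)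
    (hK : K = p K' + E)
    (L' : List P') (hTS : IsToricSystem ι' K' L')
    (m : ℕ) (hm2 : 2 ≤ m) (hmn : m ≤ L'.length) :
    IsToricSystem ι K
      (((L'.take (m - 2)).map p) ++
        [p (L'.getD (m - 2) 0) - E, E, p (L'.getD (m - 1) 0) - E] ++
        ((L'.drop m).map p)) := by
  obtain ⟨hn3, hadj, hwrap, hnon, hsum⟩ := hTS
  set n := L'.length with hn
  -- bilinearity consequences
  have h0 : ∀ c : P, ι 0 c = 0 := by
    intro c; have := hbiadd 0 0 c; simp only [add_zero] at this; omega
  have hneg : ∀ a c : P, ι (-a) c = - ι a c := by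
    intro a c; have := hbiadd a (-a) c; rw [add_neg_cancel, h0] at this; omega
  have hsub : ∀ a b c : P, ι (a - b) c = ι a c - ι b c := by
    intro a b c; rw [sub_eq_add_neg, hbiadd, hneg]; ring
  have hsubr : ∀ a b c : P, ι a (b - c) = ι a b - ι a c := by
    intro a b c; rw [hsymm, hsub, hsymm b a, hsymm c a]
  have I2 : ∀ a b : P', ι (p a - E) (p b) = ι' a b := by
    intro a b; rw [hsub, hsymm E, hpE, hpp, sub_zero]
  have I3 : ∀ a b : P', ι (p a) (p b - E) = ι' a b := by
    intro a b; rw [hsubr, hpp, hpE, sub_zero]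
  have I4 : ∀ a b : P', ι (p a - E) (p b - E) = ι' a b - 1 := by
    intro a b; rw [hsubr, I2, hsub, hpE, hE2]; ring
  have I5 : ∀ a : P', ι (p a - E) E = 1 := by
    intro a; rw [hsub, hpE, hE2]; ring
  have I6 : ∀ a : P', ι E (p a - E) = 1 := by intro a; rw [hsymm, I5]
  have I7 : ∀ a : P', ι E (p a) = 0 := by intro a; rw [hsymm, hpE]
  set x := p (L'.getD (m - 2) 0) - E with hx
  set z := p (L'.getD (m - 1) 0) - E with hz
  set A := (L'.take (m - 2)).map p with hA'
  set B := (L'.drop m).map p with hB'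
  set M := A ++ [x, E, z] ++ B with hM
  have hA : A.length = m - 2 := by simp [hA']; omega
  have hB : B.length = n - m := by simp [hB']; rfl
  have hlen : M.length = n + 1 := by simp [hM, hA, hB]; omega
  have hmap : ∀ (L : List P') k, (L.map p).getD k 0 = p (L.getD k 0) := by
    intro L k
    rcases lt_or_ge k L.length with h | h
    · rw [List.getD_eq_getElem _ _ (by simpa using h), List.getD_eq_getElem _ _ h,
        List.getElem_map]
    · rw [List.getD_eq_default _ _ (by simpa using h), List.getD_eq_default _ _ h, map_zero]
  have htake : ∀ k, k < m - 2 → (L'.take (m - 2)).getD k 0 = L'.getD k 0 := by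
    intro k hk
    have h1 : k < (L'.take (m - 2)).length := by simp; omega
    have h2 : k < L'.length := by omega
    rw [List.getD_eq_getElem _ _ h1, List.getD_eq_getElem _ _ h2]
    exact List.getElem_take
  have hdrop : ∀ k, m < k → k ≤ n → (L'.drop m).getD (k - (m + 1)) 0 = L'.getD (k - 1) 0 := by
    intro k h1 h2
    have e : k - 1 = m + (k - (m + 1)) := by omega
    have h3 : k - (m + 1) < (L'.drop m).length := by simp; omega
    have h4 : m + (k - (m + 1)) < L'.length := by omega
    rw [e, List.getD_eq_getElem _ _ h3, List.getD_eq_getElem _ _ h4]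
    exact List.getElem_drop
  have hget : ∀ k, k ≤ n → M.getD k 0 =
      if k < m - 2 then p (L'.getD k 0)
      else if k = m - 2 then x
      else if k = m - 1 then E
      else if k = m then z
      else p (L'.getD (k - 1) 0) := by
    intro k hk
    split_ifs with h1 h2 h3 h4
    · rw [hM, List.getD_append _ _ _ _ (by simp [hA]; omega),
        List.getD_append _ _ _ _ (by rw [hA]; omega), hA', hmap, htake k h1]
    · rw [hM, List.getD_append _ _ _ _ (by simp [hA]; omega),
        List.getD_append_right _ _ _ _ (by rw [hA]; omega), hA]
      subst h2; simp
    · rw [hM, List.getD_append _ _ _ _ (by simp [hA]; omega),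
        List.getD_append_right _ _ _ _ (by rw [hA]; omega), hA]
      have e : k - (m - 2) = 1 := by omega
      rw [e]; rfl
    · rw [hM, List.getD_append _ _ _ _ (by simp [hA]; omega),
        List.getD_append_right _ _ _ _ (by rw [hA]; omega), hA]
      have e : k - (m - 2) = 2 := by omega
      rw [e]; rfl
    · have hk' : m < k := by omega
      rw [hM, List.getD_append_right _ _ _ _ (by simp [hA]; omega)]
      have e : k - (A ++ [x, E, z]).length = k - (m + 1) := by simp [hA]; omega
      rw [e, hB', hmap, hdrop k hk' hk]
  have hg1 : ∀ k, k < m - 2 → M.getD k 0 = p (L'.getD k 0) := by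
    intro k hk; rw [hget k (by omega), if_pos hk]
  have hg2 : M.getD (m - 2) 0 = x := by
    rw [hget (m - 2) (by omega), if_neg (by omega), if_pos rfl]
  have hg3 : M.getD (m - 1) 0 = E := by
    rw [hget (m - 1) (by omega), if_neg (by omega), if_neg (by omega), if_pos rfl]
  have hg4 : M.getD m 0 = z := by
    rw [hget m (by omega), if_neg (by omega), if_neg (by omega), if_neg (by omega), if_pos rfl]
  have hg5 : ∀ k, m < k → k ≤ n → M.getD k 0 = p (L'.getD (k - 1) 0) := by
    intro k h1 h2
    rw [hget k h2, if_neg (by omega), if_neg (by omega), if_neg (by omega), if_neg (by omega)]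
  refine ⟨by omega, ?_, ?_, ?_, ?_⟩
  · -- adjacency
    intro i hi
    rw [hlen] at hi
    by_cases c1 : i + 1 < m - 2
    · rw [hg1 i (by omega), hg1 (i + 1) c1, hpp]; exact hadj i (by omega)
    by_cases c2 : i + 1 = m - 2
    · rw [hg1 i (by omega), c2, hg2, hx, I3, ← c2]; exact hadj i (by omega)
    by_cases c3 : i = m - 2
    · rw [c3, hg2, show m - 2 + 1 = m - 1 from by omega, hg3, hx]; exact I5 _
    by_cases c4 : i = m - 1
    · rw [c4, hg3, show m - 1 + 1 = m from by omega, hg4, hz]; exact I6 _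
    by_cases c5 : i = m
    · rw [c5, hg4, hg5 (m + 1) (by omega) (by omega), hz, I2,
        show m + 1 - 1 = m - 1 + 1 from by omega]
      exact hadj (m - 1) (by omega)
    · rw [hg5 i (by omega) (by omega), hg5 (i + 1) (by omega) (by omega), hpp,
        show i + 1 - 1 = i - 1 + 1 from by omega]
      exact hadj (i - 1) (by omega)
  · -- wrap
    rw [show M.length - 1 = n from by omega]
    by_cases c1 : m = n
    · rw [← c1, hg4, hz]
      have h0' : (0 : ℕ) < m - 2 := by omega
      rw [hg1 0 h0', I2, show m - 1 = n - 1 from by omega]; exact hwrap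
    · rw [hg5 n (by omega) (by omega)]
      by_cases c2 : m = 2
      · rw [show (0 : ℕ) = m - 2 from by omega, hg2, hx, I3,
          show m - 2 = 0 from by omega]
        exact hwrap
      · rw [hg1 0 (by omega), hpp]; exact hwrap
  · -- non-adjacent
    intro i j hij hj hne
    rw [hlen] at hj
    rw [hlen, Nat.add_sub_cancel] at hne
    by_cases ci1 : i < m - 2
    · by_cases cj1 : j < m - 2
      · rw [hg1 i ci1, hg1 j cj1, hpp]; exact hnon i j hij (by omega) (by omega)
      by_cases cj2 : j = m - 2
      · rw [hg1 i ci1, cj2, hg2, hx, I3]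
        exact hnon i (m - 2) (by omega) (by omega) (by omega)
      by_cases cj3 : j = m - 1
      · rw [hg1 i ci1, cj3, hg3]; exact hpE _
      by_cases cj4 : j = m
      · rw [hg1 i ci1, cj4, hg4, hz, I3]
        exact hnon i (m - 1) (by omega) (by omega) (by omega)
      · rw [hg1 i ci1, hg5 j (by omega) (by omega), hpp]
        exact hnon i (j - 1) (by omega) (by omega) (by omega)
    by_cases ci2 : i = m - 2
    · by_cases cj4 : j = m
      · rw [ci2, cj4, hg2, hg4, hx, hz, I4]
        have h := hadj (m - 2) (by omega)
        rw [show m - 2 + 1 = m - 1 from by omega] at h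
        omega
      · rw [ci2, hg2, hg5 j (by omega) (by omega), hx, I2]
        exact hnon (m - 2) (j - 1) (by omega) (by omega) (by omega)
    by_cases ci3 : i = m - 1
    · rw [ci3, hg3, hg5 j (by omega) (by omega)]; exact I7 _
    by_cases ci4 : i = m
    · rw [ci4, hg4, hg5 j (by omega) (by omega), hz, I2]
      exact hnon (m - 1) (j - 1) (by omega) (by omega) (by omega)
    · rw [hg5 i (by omega) (by omega), hg5 j (by omega) (by omega), hpp]
      exact hnon (i - 1) (j - 1) (by omega) (by omega) (by omega)
  · -- sum
    have e1 : (L'.take (m - 1)).sum = (L'.take (m - 2)).sum + L'.getD (m - 2) 0 := by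
      have h : m - 2 < L'.length := by omega
      rw [List.getD_eq_getElem _ _ h, show m - 1 = (m - 2) + 1 from by omega,
        List.sum_take_succ _ _ h]
    have e2 : (L'.take m).sum = (L'.take (m - 1)).sum + L'.getD (m - 1) 0 := by
      have h : m - 1 < L'.length := by omega
      have h2 := List.sum_take_succ L' (m - 1) h
      rw [show m - 1 + 1 = m from by omega] at h2
      rw [List.getD_eq_getElem _ _ h, h2]
    have e3 : (L'.take m).sum + (L'.drop m).sum = L'.sum := List.sum_take_add_sum_drop _ _
    have key : (L'.take (m - 2)).sum + L'.getD (m - 2) 0 + L'.getD (m - 1) 0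
        + (L'.drop m).sum = -K' := by
      rw [← hsum, ← e3, e2, e1]
    have hAs : A.sum = p ((L'.take (m - 2)).sum) := (map_list_sum p _).symm
    have hBs : B.sum = p ((L'.drop m).sum) := (map_list_sum p _).symm
    have key2 : p ((L'.take (m - 2)).sum) + p (L'.getD (m - 2) 0) + p (L'.getD (m - 1) 0)
        + p ((L'.drop m).sum) = -(p K') := by
      rw [← map_add, ← map_add, ← map_add, key, map_neg]
    rw [hM]
    simp only [List.sum_append, List.sum_cons, List.sum_nil]
    rw [hAs, hBs, hx, hz, hK, neg_add, ← key2]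
    abel
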